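/- Let N be a binary phylogenetic network and H any biconnected minor of the underlying undirected graph of N. Then the level of N is at least |E(H)| - |V(H)| + 1. -/

import Mathlib

open Set

namespace Phylo

variable {V : Type*}

/-- In-degree of a node in a digraph given by its edge relation. -/
noncomputable def inDeg (N : V → V → Prop) (v : V) : ℕ := {u | N u v}.ncard

/-- Out-degree of a node. -/
noncomputable def outDeg (N : V → V → Prop) (v : V) : ℕ := {w | N v w}.ncard

/-- Reachability: existence of a directed path. -/
def Reach (N : V → V → Prop) : V → V → Prop := Relation.ReflTransGen N

/-- Leaves: nodes of out-degree 0. -/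
def leaves (N : V → V → Prop) : Set V := {v | outDeg N v = 0}

/-- Internal tree nodes, i.e. the set `T(int N)`. -/
def ITN (N : V → V → Prop) : Set V := {v | inDeg N v ≤ 1 ∧ 1 ≤ outDeg N v}

/-- A (rooted) phylogenetic network structure on the digraph `N` with root `ρ`. -/
structure IsPhyloNet (N : V → V → Prop) (ρ : V) : Prop where
  acyclic : ∀ v, ¬ Relation.TransGen N v v
  root_indeg : inDeg N ρ = 0
  root_connects : ∀ v, Reach N ρ v
  retic_out : ∀ v, 2 ≤ inDeg N v → outDeg N v = 1
  no_elementary : ∀ v, ¬ (inDeg N v = 1 ∧ outDeg N v = 1)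

/-- Binarity of a phylogenetic network. -/
structure IsBinary (N : V → V → Prop) (ρ : V) : Prop where
  retic_deg : ∀ v, 2 ≤ inDeg N v → inDeg N v = 2 ∧ outDeg N v = 1
  tree_deg : ∀ v, v ≠ ρ → inDeg N v ≤ 1 → 1 ≤ outDeg N v →
      inDeg N v = 1 ∧ outDeg N v = 2
  root_deg : outDeg N ρ = 2 ∨ outDeg N ρ = 0

/-- Tree-child: every internal node has a child of tree type (in-degree ≤ 1). -/
def IsTreeChild (N : V → V → Prop) : Prop :=
  ∀ v, 1 ≤ outDeg N v → ∃ w, N v w ∧ inDeg N w ≤ 1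

/-- `u` is the tree-node root of a cherry. -/
def IsCherryRoot (N : V → V → Prop) (u : V) : Prop :=
  inDeg N u ≤ 1 ∧ ∃ x y, x ≠ y ∧ N u x ∧ N u y ∧ outDeg N x = 0 ∧ outDeg N y = 0 ∧
    ∀ w, N u w → w = x ∨ w = y

/-- `u` is the tree-node root of a reticulated cherry. -/
def IsRetCherryRoot (N : V → V → Prop) (u : V) : Prop :=
  inDeg N u ≤ 1 ∧ ∃ h y, h ≠ y ∧ N u h ∧ N u y ∧ 2 ≤ inDeg N h ∧ outDeg N y = 0 ∧
    (∃ x, N h x ∧ outDeg N x = 0 ∧ ∀ w, N h w → w = x) ∧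
    ∀ w, N u w → w = h ∨ w = y

/-- Terminal node: root of a cherry or of a reticulated cherry. -/
def IsTerminal (N : V → V → Prop) (u : V) : Prop :=
  IsCherryRoot N u ∨ IsRetCherryRoot N u

/-- Cherry reduction rooted at `u`: remove all descendant edges of `u`
(and hence all strict descendant tree nodes of `u` become isolated/removed). -/
def CR (N : V → V → Prop) (u : V) : V → V → Prop :=
  fun a b => N a b ∧ ¬ Reach N u a

/-- `IsCRSeq N L` : `L` is the list of reduced nodes of a full cherry reduction
sequence of `N`, ending in a single-node network (no edges left). -/
def IsCRSeq : (V → V → Prop) → List V → Prop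
  | N, [] => ∀ a b, ¬ N a b
  | N, u :: us => IsTerminal N u ∧ IsCRSeq (CR N u) us

/-- Orchard networks: those admitting a full cherry reduction sequence. -/
def IsOrchard (N : V → V → Prop) : Prop := ∃ L, IsCRSeq N L

/-- Underlying undirected graph of a digraph. -/
def underlying (N : V → V → Prop) : SimpleGraph V := SimpleGraph.fromRel N

/-- Cover relation of the reachability poset on internal tree nodes. -/
def Covers (N : V → V → Prop) (u v : V) : Prop :=
  u ∈ ITN N ∧ v ∈ ITN N ∧ u ≠ v ∧ Reach N u v ∧
    ¬ ∃ z ∈ ITN N, z ≠ u ∧ z ≠ v ∧ Reach N u z ∧ Reach N z v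

/-- Biconnected set of nodes of an undirected graph. -/
def IsBiconn (G : SimpleGraph V) (B : Set V) : Prop :=
  B.Nonempty ∧ (G.induce B).Preconnected ∧ ∀ v ∈ B, (G.induce (B \ {v})).Preconnected

/-- Blob: maximal biconnected component. -/
def IsBlob (G : SimpleGraph V) (B : Set V) : Prop :=
  IsBiconn G B ∧ ∀ B', IsBiconn G B' → B ⊆ B' → B' = B

/-- Level of a network: maximum number of reticulations in a blob. -/
noncomputable def level (N : V → V → Prop) : ℕ :=
  sSup {k | ∃ B, IsBlob (underlying N) B ∧ k = (B ∩ {v | 2 ≤ inDeg N v}).ncard}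

/-- `H` is a minor of `G`, presented by branch sets. -/
def IsMinorOf {α β : Type*} (H : SimpleGraph β) (G : SimpleGraph α) : Prop :=
  ∃ f : β → Set α,
    (∀ b, (f b).Nonempty) ∧
    (∀ b, (G.induce (f b)).Preconnected) ∧
    (∀ b b', b ≠ b' → Disjoint (f b) (f b')) ∧
    (∀ b b', H.Adj b b' → ∃ x ∈ f b, ∃ y ∈ f b', G.Adj x y)

/-- A list is a linear extension of the reachability poset on `T(int N)`. -/
def IsLinExtList (N : V → V → Prop) (L : List V) : Prop :=
  L.Nodup ∧ (∀ v, v ∈ L ↔ v ∈ ITN N) ∧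
  ∀ (i j : ℕ) (hi : i < L.length) (hj : j < L.length),
    Reach N (L.get ⟨i, hi⟩) (L.get ⟨j, hj⟩) → i ≤ j

/-- A list is a linear extension of the order-dual of the reachability poset. -/
def IsDualLinExtList (N : V → V → Prop) (L : List V) : Prop :=
  L.Nodup ∧ (∀ v, v ∈ L ↔ v ∈ ITN N) ∧
  ∀ (i j : ℕ) (hi : i < L.length) (hj : j < L.length),
    Reach N (L.get ⟨j, hj⟩) (L.get ⟨i, hi⟩) → i ≤ j

end Phylo

open Phylo

namespace StmtAux

variable {α : Type*} {β : Type*}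

variable {α : Type*} {β : Type*}

def relOn' (G : SimpleGraph α) (S : Set α) (a b : α) : Prop := a ∈ S ∧ b ∈ S ∧ G.Adj a b

section
variable {G : SimpleGraph α} {S : Set α}

lemma rtg_symm' {a b : α} (h : Relation.ReflTransGen (relOn' G S) a b) :
    Relation.ReflTransGen (relOn' G S) b a :=
  Relation.ReflTransGen.mono (r := Function.swap (relOn' G S)) (p := relOn' G S)
    (fun _ _ ⟨ha, hb, h⟩ => ⟨hb, ha, h.symm⟩) _ _ (Relation.ReflTransGen.swap _ _ h)

lemma rtg_mono' {T : Set α} (hST : S ⊆ T) {a b : α}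
    (h : Relation.ReflTransGen (relOn' G S) a b) : Relation.ReflTransGen (relOn' G T) a b :=
  Relation.ReflTransGen.mono (p := relOn' G T) (fun _ _ ⟨ha, hb, hadj⟩ => ⟨hST ha, hST hb, hadj⟩) _ _ h

lemma reach_of_rtg' {x y : α} (hx : x ∈ S)
    (h : Relation.ReflTransGen (relOn' G S) x y) :
    ∀ (hy : y ∈ S), (G.induce S).Reachable ⟨x, hx⟩ ⟨y, hy⟩ := by
  induction h with
  | refl => intro hy; rfl
  | tail _ h₂ ih =>
    intro hy
    exact (ih h₂.1).trans (SimpleGraph.Adj.reachable (SimpleGraph.comap_adj.mpr h₂.2.2))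

lemma rtg_of_reach' {a b : ↥S}
    (h : (G.induce S).Reachable a b) : Relation.ReflTransGen (relOn' G S) a.1 b.1 := by
  obtain ⟨w⟩ := h
  induction w with
  | nil => exact .refl
  | @cons u v w hadj _ ih =>
    exact .head ⟨u.2, v.2, SimpleGraph.comap_adj.mp hadj⟩ ih

lemma preconnected_iff_rtg' :
    (G.induce S).Preconnected ↔ ∀ x ∈ S, ∀ y ∈ S, Relation.ReflTransGen (relOn' G S) x y := by
  constructor
  · intro h x hx y hy; exact rtg_of_reach' (h ⟨x, hx⟩ ⟨y, hy⟩)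
  · intro h a b; exact reach_of_rtg' a.2 (h a.1 a.2 b.1 b.2) b.2

end

/-- A minor model. -/
def ModelOf (G : SimpleGraph α) (H : SimpleGraph β) (f : β → Set α) : Prop :=
  (∀ b, (f b).Nonempty) ∧
  (∀ b, (G.induce (f b)).Preconnected) ∧
  (∀ b b', b ≠ b' → Disjoint (f b) (f b')) ∧
  (∀ b b', H.Adj b b' → ∃ x ∈ f b, ∃ y ∈ f b', G.Adj x y)

lemma minimal_model_biconn [Fintype α] [Fintype β]
    (G : SimpleGraph α) (H : SimpleGraph β)
    (hconnH : H.Preconnected)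
    (hbic : ∀ v : β, (H.induce {w | w ≠ v}).Preconnected)
    (hminor : ∃ f, ModelOf G H f) :
    ∃ f : β → Set α, ModelOf G H f ∧
      ((⋃ b, f b).Nonempty → ((G.induce (⋃ b, f b)).Preconnected ∧
        ∀ v ∈ (⋃ b, f b), (G.induce ((⋃ b, f b) \ {v})).Preconnected)) := by
  classical
  -- choose a minimal model
  set 𝒩 : Set ℕ := {n | ∃ f, ModelOf G H f ∧ (⋃ b, f b).ncard = n} with h𝒩
  have h𝒩ne : 𝒩.Nonempty := by
    obtain ⟨f, hf⟩ := hminor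
    exact ⟨(⋃ b, f b).ncard, f, hf, rfl⟩
  obtain ⟨f, hf, hfcard⟩ := Nat.sInf_mem h𝒩ne
  have hmin : ∀ f', ModelOf G H f' → (⋃ b, f b).ncard ≤ (⋃ b, f' b).ncard := by
    intro f' hf'
    rw [hfcard]
    exact Nat.sInf_le ⟨f', hf', rfl⟩
  obtain ⟨hne, hconn, hdisj, hadj⟩ := hf
  refine ⟨f, ⟨hne, hconn, hdisj, hadj⟩, ?_⟩
  intro _
  set W : Set α := ⋃ b, f b with hW
  have uniq : ∀ {x : α} {b b' : β}, x ∈ f b → x ∈ f b' → b = b' := by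
    intro x b b' hb hb'
    by_contra hne'
    exact Set.disjoint_left.mp (hdisj b b' hne') hb hb'
  have intra : ∀ b, ∀ x ∈ f b, ∀ y ∈ f b, Relation.ReflTransGen (relOn' G (f b)) x y :=
    fun b => preconnected_iff_rtg'.mp (hconn b)
  -- generic transfer of H-reachability within a vertex class K to G-reachability in S
  have connect : ∀ (S : Set α) (K : Set β), (∀ b ∈ K, f b ⊆ S) →
      ∀ (b b' : β), b' ∈ K → Relation.ReflTransGen (relOn' H K) b b' →
      ∀ x ∈ f b, ∀ y ∈ f b', Relation.ReflTransGen (relOn' G S) x y := by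
    intro S K hK b b' hb'K hbb
    induction hbb using Relation.ReflTransGen.head_induction_on with
    | refl =>
      intro x hx y hy
      exact rtg_mono' (hK b' hb'K) (intra b' x hx y hy)
    | @head a c hac hcb ih =>
      intro x hx y hy
      obtain ⟨u, hu, w, hw, huw⟩ := hadj a c hac.2.2
      have h1 : Relation.ReflTransGen (relOn' G S) x u :=
        rtg_mono' (hK a hac.1) (intra a x hx u hu)
      have h2 : Relation.ReflTransGen (relOn' G S) u w :=
        Relation.ReflTransGen.single ⟨hK a hac.1 hu, hK c hac.2.1 hw, huw⟩
      exact (h1.trans h2).trans (ih w hw y hy)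
  -- Claim A : W is connected
  have hreachH : ∀ b b' : β, Relation.ReflTransGen (relOn' H (Set.univ : Set β)) b b' := by
    intro b b'
    obtain ⟨w⟩ := hconnH b b'
    induction w with
    | nil => exact .refl
    | cons hadj' _ ih => exact .head ⟨trivial, trivial, hadj'⟩ ih
  have claimA : (G.induce W).Preconnected := by
    rw [preconnected_iff_rtg']
    intro x hx y hy
    obtain ⟨b, hb⟩ := Set.mem_iUnion.mp hx
    obtain ⟨b', hb'⟩ := Set.mem_iUnion.mp hy
    exact connect W Set.univ (fun c _ => Set.subset_iUnion f c) b b' trivial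
      (hreachH b b') x hb y hb'
  refine ⟨claimA, ?_⟩
  -- Claim B : W minus any vertex is connected
  intro v hv
  obtain ⟨b₀, hb₀⟩ := Set.mem_iUnion.mp hv
  set S : Set α := W \ {v} with hS
  set K : Set β := {b | b ≠ b₀} with hK
  have hKsub : ∀ b ∈ K, f b ⊆ S := by
    intro b hb x hx
    refine ⟨Set.mem_iUnion.mpr ⟨b, hx⟩, ?_⟩
    intro hxv
    rw [Set.mem_singleton_iff] at hxv
    subst hxv
    exact hb (uniq hx hb₀)
  have hKreach : ∀ b ∈ K, ∀ b' ∈ K, Relation.ReflTransGen (relOn' H K) b b' :=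
    preconnected_iff_rtg'.mp (hbic b₀)
  have hsubS : f b₀ \ {v} ⊆ S := by
    intro y hy
    exact ⟨Set.mem_iUnion.mpr ⟨b₀, hy.1⟩, hy.2⟩
  -- anchors for vertices of f b₀ \ {v}
  have anchor : ∀ x ∈ f b₀ \ ({v} : Set α), ∃ z b', b' ≠ b₀ ∧ z ∈ f b' ∧
      Relation.ReflTransGen (relOn' G S) x z := by
    intro x hx
    set C : Set α := {y | y ∈ f b₀ \ ({v} : Set α) ∧
      Relation.ReflTransGen (relOn' G (f b₀ \ {v})) x y} with hC
    have hxC : x ∈ C := ⟨hx, .refl⟩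
    have hclosure : ∀ {a c : α}, c ∈ C → a ∈ f b₀ → a ≠ v → G.Adj a c → a ∈ C := by
      intro a c hc ha hav hadj'
      have haD : a ∈ f b₀ \ ({v} : Set α) := ⟨ha, by simp [hav]⟩
      exact ⟨haD, hc.2.trans (.single ⟨hc.1, haD, hadj'.symm⟩)⟩
    by_cases hout : ∃ y z b', y ∈ C ∧ b' ≠ b₀ ∧ z ∈ f b' ∧ G.Adj y z
    · obtain ⟨y, z, b', hyC, hb', hzb', hyz⟩ := hout
      refine ⟨z, b', hb', hzb', ?_⟩
      have h1 : Relation.ReflTransGen (relOn' G S) x y := rtg_mono' hsubS hyC.2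
      exact h1.trans (.single ⟨hsubS hyC.1, hKsub b' hb' hzb', hyz⟩)
    · exfalso
      push_neg at hout
      have hvC : v ∉ C := fun h => h.1.2 rfl
      have hCsub : C ⊆ f b₀ := fun y hy => hy.1.1
      set f' : β → Set α := Function.update f b₀ (f b₀ \ C) with hf'
      have hf'b₀ : f' b₀ = f b₀ \ C := Function.update_self _ _ _
      have hf'other : ∀ b, b ≠ b₀ → f' b = f b := fun b hb => Function.update_of_ne hb _ _
      -- connectivity of f b₀ \ C
      have reachv : ∀ p, Relation.ReflTransGen (relOn' G (f b₀)) p v →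
          p ∈ f b₀ \ C → Relation.ReflTransGen (relOn' G (f b₀ \ C)) p v := by
        intro p hp
        induction hp using Relation.ReflTransGen.head_induction_on with
        | refl => intro _; exact .refl
        | @head a c hac hcv ih =>
          intro ha
          by_cases hcC : c ∈ C
          · have hav : a = v := by
              by_contra hav
              exact ha.2 (hclosure hcC hac.1 hav hac.2.2)
            subst hav
            exact .refl
          · exact .head ⟨ha, ⟨hac.2.1, hcC⟩, hac.2.2⟩ (ih ⟨hac.2.1, hcC⟩)
      have hmodel' : ModelOf G H f' := by
        refine ⟨?_, ?_, ?_, ?_⟩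
        · intro b
          rcases eq_or_ne b₀ b with rfl | hb
          · rw [hf'b₀]
            exact ⟨v, hb₀, hvC⟩
          · rw [hf'other b (Ne.symm hb)]
            exact hne b
        · intro b
          rcases eq_or_ne b₀ b with rfl | hb
          · rw [hf'b₀, preconnected_iff_rtg']
            intro p hp q hq
            have h1 := reachv p (intra b₀ p hp.1 v hb₀) hp
            have h2 := reachv q (intra b₀ q hq.1 v hb₀) hq
            exact h1.trans (rtg_symm' h2)
          · rw [hf'other b (Ne.symm hb), preconnected_iff_rtg']
            exact preconnected_iff_rtg'.mp (hconn b)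
        · intro b b' hbb'
          have hsub1 : f' b ⊆ f b := by
            rcases eq_or_ne b₀ b with rfl | hb
            · rw [hf'b₀]; exact Set.diff_subset
            · rw [hf'other b (Ne.symm hb)]
          have hsub2 : f' b' ⊆ f b' := by
            rcases eq_or_ne b₀ b' with rfl | hb
            · rw [hf'b₀]; exact Set.diff_subset
            · rw [hf'other b' (Ne.symm hb)]
          exact (hdisj b b' hbb').mono hsub1 hsub2
        · intro b b' hbb'
          obtain ⟨x', hx', y', hy', hxy'⟩ := hadj b b' hbb'
          have hbne : b ≠ b' := hbb'.ne
          rcases eq_or_ne b₀ b with rfl | hb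
          · have hx'C : x' ∉ C := fun h => hout x' y' b' h (Ne.symm hbne) hy' hxy'
            refine ⟨x', ?_, y', ?_, hxy'⟩
            · rw [hf'b₀]; exact ⟨hx', hx'C⟩
            · rw [hf'other b' (Ne.symm hbne)]; exact hy'
          · rcases eq_or_ne b₀ b' with rfl | hb'
            · have hy'C : y' ∉ C := fun h => hout y' x' b h (Ne.symm hb) hx' hxy'.symm
              refine ⟨x', ?_, y', ?_, hxy'⟩
              · rw [hf'other b (Ne.symm hb)]; exact hx'
              · rw [hf'b₀]; exact ⟨hy', hy'C⟩
            · refine ⟨x', ?_, y', ?_, hxy'⟩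
              · rw [hf'other b (Ne.symm hb)]; exact hx'
              · rw [hf'other b' (Ne.symm hb')]; exact hy'
      -- the new union is strictly smaller
      have hunion : (⋃ b, f' b) = W \ C := by
        ext z
        constructor
        · intro hz
          obtain ⟨b, hzb⟩ := Set.mem_iUnion.mp hz
          rcases eq_or_ne b₀ b with rfl | hb
          · rw [hf'b₀] at hzb
            exact ⟨Set.mem_iUnion.mpr ⟨b₀, hzb.1⟩, hzb.2⟩
          · rw [hf'other b (Ne.symm hb)] at hzb
            refine ⟨Set.mem_iUnion.mpr ⟨b, hzb⟩, ?_⟩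
            intro hzC
            exact hb (uniq hzb (hCsub hzC)).symm
        · intro hz
          obtain ⟨b, hzb⟩ := Set.mem_iUnion.mp hz.1
          rcases eq_or_ne b₀ b with rfl | hb
          · exact Set.mem_iUnion.mpr ⟨b₀, by rw [hf'b₀]; exact ⟨hzb, hz.2⟩⟩
          · exact Set.mem_iUnion.mpr ⟨b, by rw [hf'other b (Ne.symm hb)]; exact hzb⟩
      have hssub : W \ C ⊂ W := by
        refine ⟨Set.diff_subset, fun h => ?_⟩
        have hxW : x ∈ W := Set.mem_iUnion.mpr ⟨b₀, hx.1⟩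
        exact (h hxW).2 hxC
      have hlt : (⋃ b, f' b).ncard < W.ncard := by
        rw [hunion]
        exact Set.ncard_lt_ncard hssub (Set.toFinite _)
      exact absurd (hmin f' hmodel') (by omega)
  -- assemble claim B
  rw [preconnected_iff_rtg']
  have anch : ∀ x ∈ S, ∃ z b', b' ≠ b₀ ∧ z ∈ f b' ∧
      Relation.ReflTransGen (relOn' G S) x z := by
    intro x hxS
    obtain ⟨b, hb⟩ := Set.mem_iUnion.mp hxS.1
    by_cases hbb : b = b₀
    · subst hbb
      exact anchor x ⟨hb, hxS.2⟩
    · exact ⟨x, b, hbb, hb, .refl⟩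
  intro x hx y hy
  obtain ⟨z, b', hb', hz, hxz⟩ := anch x hx
  obtain ⟨z', b'', hb'', hz', hyz'⟩ := anch y hy
  have hmid := connect S K hKsub b' b'' hb'' (hKreach b' hb' b'' hb'') z hz z' hz'
  exact (hxz.trans hmid).trans (rtg_symm' hyz')

/-- minimal element wrt an acyclic relation -/

lemma exists_min_rel {r : α → α → Prop} (hacyc : ∀ v, ¬ Relation.TransGen r v v) :
    ∀ (n : ℕ) (B : Set α), B.Finite → B.ncard ≤ n → B.Nonempty →
      ∃ m ∈ B, ∀ u ∈ B, ¬ Relation.TransGen r u m := by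
  intro n
  induction n with
  | zero =>
    intro B hfin hcard hne
    have := (Set.ncard_pos hfin).mpr hne; omega
  | succ n ih =>
    intro B hfin hcard hne
    obtain ⟨b, hb⟩ := hne
    by_cases hmin : ∀ u ∈ B, ¬ Relation.TransGen r u b
    · exact ⟨b, hb, hmin⟩
    · push_neg at hmin
      obtain ⟨u, hu, htg⟩ := hmin
      set B' : Set α := {x ∈ B | Relation.TransGen r x b} with hB'
      have hbB' : b ∉ B' := fun h => hacyc b h.2
      have hsub : B' ⊂ B := ⟨fun x hx => hx.1, fun h => hbB' (h hb)⟩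
      have hlt : B'.ncard < B.ncard := Set.ncard_lt_ncard hsub hfin
      obtain ⟨m, hm, hmmin⟩ := ih B' (hfin.subset hsub.1) (by omega) ⟨u, hu, htg⟩
      refine ⟨m, hm.1, fun w hw htg' => ?_⟩
      exact hmmin w ⟨hw, htg'.trans hm.2⟩ htg'


variable {α : Type*}

lemma card_le_ncard_edgeSet_add_one [Fintype α] [Nonempty α] {G : SimpleGraph α}
    (hG : G.Preconnected) : Fintype.card α ≤ G.edgeSet.ncard + 1 := by
  classical
  obtain ⟨u⟩ := ‹Nonempty α›
  have key : ∀ v : α, v ≠ u → ∃ x : α, G.Adj v x ∧ G.dist x u + 1 ≤ G.dist v u := by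
    intro v hv
    obtain ⟨p, hp⟩ := (hG v u).exists_walk_length_eq_dist
    obtain ⟨x, hadj, q, rfl⟩ := SimpleGraph.Walk.exists_eq_cons_of_ne hv p
    refine ⟨x, hadj, ?_⟩
    have h1 := SimpleGraph.dist_le q
    simp only [SimpleGraph.Walk.length_cons] at hp
    omega
  choose nxt hadj hdist using key
  have hmaps : ∀ v ∈ {v : α | v ≠ u}, (if h : v = u then s(u,u) else s(v, nxt v h)) ∈ G.edgeSet := by
    intro v hv
    rw [dif_neg hv]
    exact (SimpleGraph.mem_edgeSet _).mpr (hadj v hv)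
  have hinj : Set.InjOn (fun v => if h : v = u then s(u,u) else s(v, nxt v h)) {v : α | v ≠ u} := by
    intro v hv v' hv' heq
    simp only [dif_neg hv, dif_neg hv'] at heq
    rw [Sym2.eq_iff] at heq
    rcases heq with ⟨h1, _⟩ | ⟨h1, h2⟩
    · exact h1
    · exfalso
      have d1 := hdist v hv
      have d2 := hdist v' hv'
      have p1 : 0 < G.dist v u := (hG v u).pos_dist_of_ne hv
      rw [← h1] at d2
      rw [h2] at d1
      omega
  have hcount : {v : α | v ≠ u}.ncard ≤ G.edgeSet.ncard :=
    Set.ncard_le_ncard_of_injOn _ hmaps hinj (Set.toFinite _)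
  have : {v : α | v ≠ u} = ({u} : Set α)ᶜ := by ext x; simp
  rw [this] at hcount
  have h2 : ({u} : Set α).ncard + ({u} : Set α)ᶜ.ncard = Fintype.card α := by
    rw [Set.ncard_add_ncard_compl]; exact Nat.card_eq_fintype_card
  have h3 : ({u} : Set α).ncard = 1 := Set.ncard_singleton u
  omega

/-- edges of `G` within `S` -/
def edgesIn (G : SimpleGraph α) (S : Set α) : Set (Sym2 α) :=
  {e | e ∈ G.edgeSet ∧ ∀ x ∈ e, x ∈ S}

lemma edgesIn_mono {G : SimpleGraph α} {S T : Set α} (h : S ⊆ T) :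
    edgesIn G S ⊆ edgesIn G T := fun e he => ⟨he.1, fun x hx => h (he.2 x hx)⟩

lemma ncard_le_edgesIn [Fintype α] {G : SimpleGraph α} {S : Set α} (hne : S.Nonempty)
    (hconn : (G.induce S).Preconnected) :
    S.ncard ≤ (edgesIn G S).ncard + 1 := by
  classical
  haveI : Fintype ↥S := Fintype.ofFinite _
  haveI : Nonempty ↥S := hne.to_subtype
  have h1 : Fintype.card ↥S ≤ (G.induce S).edgeSet.ncard + 1 :=
    card_le_ncard_edgeSet_add_one hconn
  have h2 : S.ncard = Fintype.card ↥S := by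
    rw [← Nat.card_coe_set_eq, Nat.card_eq_fintype_card]
  have h3 : (G.induce S).edgeSet.ncard ≤ (edgesIn G S).ncard := by
    refine Set.ncard_le_ncard_of_injOn (Sym2.map Subtype.val) ?_ ?_ (Set.toFinite _)
    · intro e he
      induction e using Sym2.ind with
      | _ x y =>
        rw [SimpleGraph.mem_edgeSet] at he
        refine ⟨(SimpleGraph.mem_edgeSet _).mpr (SimpleGraph.comap_adj.mp he), ?_⟩
        intro z hz
        rw [Sym2.map_pair_eq, Sym2.mem_iff] at hz
        rcases hz with rfl | rfl
        · exact x.2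
        · exact y.2
    · exact (Sym2.map.injective Subtype.val_injective).injOn
  omega


variable {α : Type*}


lemma retic_bound [Fintype α] (N : α → α → Prop)
    (hacyc : ∀ v, ¬ Relation.TransGen N v v)
    (hdeg2 : ∀ v, 2 ≤ {u | N u v}.ncard → {u | N u v}.ncard ≤ 2)
    {B : Set α} (hne : B.Nonempty)
    (exists_min : ∃ m ∈ B, ∀ u ∈ B, ¬ Relation.TransGen N u m) :
    (edgesIn (SimpleGraph.fromRel N) B).ncard + 1 ≤
      B.ncard + (B ∩ {v | 2 ≤ {u | N u v}.ncard}).ncard := by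
  classical
  obtain ⟨m, hmB, hmmin⟩ := exists_min
  set G := SimpleGraph.fromRel N with hG
  set R : Set α := {v | 2 ≤ {u | N u v}.ncard} with hR
  set D : Set (α × α) := {p | p.1 ∈ B ∧ p.2 ∈ B ∧ N p.1 p.2} with hD
  -- edges inject into directed pairs
  have hexists : ∀ e ∈ edgesIn G B, ∃ p, p ∈ D ∧ Sym2.mk p.1 p.2 = e := by
    intro e he
    obtain ⟨he1, he2⟩ := he
    induction e using Sym2.ind with
    | _ a b =>
      rw [SimpleGraph.mem_edgeSet, hG, SimpleGraph.fromRel_adj] at he1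
      have ha : a ∈ B := he2 a (by simp)
      have hb : b ∈ B := he2 b (by simp)
      rcases he1.2 with h | h
      · exact ⟨(a, b), ⟨ha, hb, h⟩, rfl⟩
      · exact ⟨(b, a), ⟨hb, ha, h⟩, Sym2.eq_swap⟩
  have hDfin : D.Finite := Set.toFinite _
  have h1 : (edgesIn G B).ncard ≤ D.ncard := by
    refine Set.ncard_le_ncard_of_injOn
      (fun e => if h : ∃ p, p ∈ D ∧ Sym2.mk p.1 p.2 = e then h.choose else (m, m)) ?_ ?_ hDfin
    · intro e he
      have h := hexists e he
      simp only [dif_pos h]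
      exact h.choose_spec.1
    · intro e he e' he' heq
      have h := hexists e he
      have h' := hexists e' he'
      simp only [dif_pos h, dif_pos h'] at heq
      rw [← h.choose_spec.2, ← h'.choose_spec.2, heq]
  -- count directed pairs fiberwise over second component
  set Bf : Finset α := (Set.toFinite B).toFinset with hBf
  set Df : Finset (α × α) := hDfin.toFinset with hDf
  have hmem : ∀ p ∈ Df, p.2 ∈ Bf := by
    intro p hp
    rw [hDf, Set.Finite.mem_toFinset] at hp
    rw [hBf, Set.Finite.mem_toFinset]
    exact hp.2.1
  have hsum : Df.card = ∑ v ∈ Bf, (Df.filter (fun p => p.2 = v)).card :=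
    Finset.card_eq_sum_card_fiberwise hmem
  have hfib : ∀ v, (Df.filter (fun p => p.2 = v)).card ≤ (if v ∈ R then 2 else 1) := by
    intro v
    have hle : (Df.filter (fun p => p.2 = v)).card ≤ {u | N u v}.ncard := by
      rw [Set.ncard_eq_toFinset_card _ (Set.toFinite _)]
      refine Finset.card_le_card_of_injOn Prod.fst ?_ ?_
      · intro p hp
        rw [Finset.mem_coe, Finset.mem_filter] at hp
        rw [Finset.mem_coe, Set.Finite.mem_toFinset]
        have := hp.1
        rw [hDf, Set.Finite.mem_toFinset] at this
        have h2 := hp.2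
        subst h2
        exact this.2.2
      · intro p hp q hq heq
        simp only [Finset.coe_filter, Set.mem_setOf_eq] at hp hq
        exact Prod.ext heq (hp.2.trans hq.2.symm)
    by_cases hv : v ∈ R
    · rw [if_pos hv]
      exact hle.trans (hdeg2 v hv)
    · rw [if_neg hv]
      refine hle.trans ?_
      rw [hR, Set.mem_setOf_eq, not_le] at hv
      omega
  have hfibm : (Df.filter (fun p => p.2 = m)).card = 0 := by
    rw [Finset.card_eq_zero, Finset.filter_eq_empty_iff]
    intro p hp hpm
    rw [hDf, Set.Finite.mem_toFinset] at hp
    exact hmmin p.1 hp.1 (hpm ▸ Relation.TransGen.single hp.2.2)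
  have hmBf : m ∈ Bf := by rw [hBf, Set.Finite.mem_toFinset]; exact hmB
  have hsum2 : ∑ v ∈ Bf, (Df.filter (fun p => p.2 = v)).card
      = ∑ v ∈ Bf.erase m, (Df.filter (fun p => p.2 = v)).card :=
    (Finset.sum_erase (f := fun v => (Df.filter (fun p => p.2 = v)).card) Bf hfibm).symm
  have hsum3 : ∑ v ∈ Bf.erase m, (Df.filter (fun p => p.2 = v)).card
      ≤ ∑ v ∈ Bf.erase m, (if v ∈ R then 2 else 1) :=
    Finset.sum_le_sum (fun v _ => hfib v)
  have hsum4 : (if m ∈ R then 2 else 1) + ∑ v ∈ Bf.erase m, (if v ∈ R then 2 else 1)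
      = ∑ v ∈ Bf, (if v ∈ R then 2 else 1) :=
    Finset.add_sum_erase Bf (fun v => if v ∈ R then 2 else 1) hmBf
  have hgm : 1 ≤ (if m ∈ R then 2 else 1) := by by_cases h : m ∈ R <;> simp [h]
  have hsum5 : ∑ v ∈ Bf, (if v ∈ R then 2 else 1) = Bf.card + (Bf.filter (fun v => v ∈ R)).card := by
    have h1 : ∀ v ∈ Bf, (if v ∈ R then 2 else 1) = 1 + (if v ∈ R then 1 else 0) := by
      intro v _; by_cases h : v ∈ R <;> simp [h]
    rw [Finset.sum_congr rfl h1, Finset.sum_add_distrib, Finset.sum_const, smul_eq_mul, mul_one]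
    rw [Finset.card_filter]
  have hBcard : Bf.card = B.ncard := (Set.ncard_eq_toFinset_card _ _).symm
  have hRcard : (Bf.filter (fun v => v ∈ R)).card = (B ∩ R).ncard := by
    rw [Set.ncard_eq_toFinset_card _ (Set.toFinite _)]
    congr 1
    ext x
    simp only [hBf, Set.Finite.mem_toFinset, Finset.mem_filter]
    exact Iff.rfl
  have hDcard : D.ncard = Df.card := Set.ncard_eq_toFinset_card _ _
  omega


variable {α : Type*} {β : Type*}


lemma model_count [Fintype α] [Fintype β] [Nonempty β]
    (G : SimpleGraph α) (H : SimpleGraph β) (f : β → Set α)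
    (hne : ∀ b, (f b).Nonempty)
    (hconn : ∀ b, (G.induce (f b)).Preconnected)
    (hdisj : ∀ b b', b ≠ b' → Disjoint (f b) (f b'))
    (hadj : ∀ b b', H.Adj b b' → ∃ x ∈ f b, ∃ y ∈ f b', G.Adj x y)
    (hEdgesIn : ∀ (S : Set α), S.Nonempty → (G.induce S).Preconnected →
      S.ncard ≤ (edgesIn G S).ncard + 1) :
    H.edgeSet.ncard + (⋃ b, f b).ncard ≤
      (edgesIn G (⋃ b, f b)).ncard + Fintype.card β := by
  classical
  haveI : Nonempty α := (hne (Classical.arbitrary β)).to_subtype.elim fun x => ⟨x.1⟩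
  set W : Set α := ⋃ b, f b with hW
  have uniq : ∀ {x b b'}, x ∈ f b → x ∈ f b' → b = b' := by
    intro x b b' hb hb'
    by_contra hne'
    exact Set.disjoint_left.mp (hdisj b b' hne') hb hb'
  set Ef : Set α → Finset (Sym2 α) := fun S => (Set.toFinite (edgesIn G S)).toFinset with hEf
  -- (b) intra-edge finsets are pairwise disjoint
  have hintra_disj : ∀ b b', b ≠ b' → Disjoint (Ef (f b)) (Ef (f b')) := by
    intro b b' hbb
    rw [Finset.disjoint_left]
    intro e he he'
    rw [hEf, Set.Finite.mem_toFinset] at he he'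
    induction e using Sym2.ind with
    | _ x y =>
      have hx : x ∈ f b := he.2 x (by simp)
      have hx' : x ∈ f b' := he'.2 x (by simp)
      exact hbb (uniq hx hx')
  set A : Finset (Sym2 α) := Finset.univ.biUnion (fun b => Ef (f b)) with hA
  have hAcard : A.card = ∑ b, (Ef (f b)).card :=
    Finset.card_biUnion (fun b _ b' _ h => hintra_disj b b' h)
  -- (c) inter edges
  set P : Sym2 β → Sym2 α → Prop := fun e g =>
    ∃ x y bb bb', G.Adj x y ∧ g = s(x,y) ∧ x ∈ f bb ∧ y ∈ f bb' ∧ e = s(bb,bb') ∧ bb ≠ bb'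
    with hP
  have hex : ∀ e ∈ H.edgeSet, ∃ g, P e g := by
    intro e he
    induction e using Sym2.ind with
    | _ b b' =>
      rw [SimpleGraph.mem_edgeSet] at he
      obtain ⟨x, hx, y, hy, hxy⟩ := hadj b b' he
      exact ⟨s(x,y), x, y, b, b', hxy, rfl, hx, hy, rfl, he.ne⟩
  set gi : Sym2 β → Sym2 α := fun e => if h : ∃ g, P e g then h.choose else s(Classical.arbitrary α, Classical.arbitrary α) with hgi
  have hgiP : ∀ e ∈ H.edgeSet, P e (gi e) := by
    intro e he
    have h := hex e he
    simp only [hgi, dif_pos h]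
    exact h.choose_spec
  set EH : Finset (Sym2 β) := (Set.toFinite H.edgeSet).toFinset with hEH
  set Img : Finset (Sym2 α) := EH.image gi with hImg
  have hinj : Set.InjOn gi ↑EH := by
    intro e he e' he' heq
    rw [Finset.mem_coe, hEH, Set.Finite.mem_toFinset] at he he'
    obtain ⟨x, y, bb, bb', hxy, hg, hxb, hyb, he1, hne1⟩ := hgiP e he
    obtain ⟨x', y', cc, cc', hxy', hg', hxb', hyb', he1', hne1'⟩ := hgiP e' he'
    rw [heq] at hg
    rw [hg'] at hg
    rw [Sym2.eq_iff] at hg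
    rcases hg with ⟨rfl, rfl⟩ | ⟨rfl, rfl⟩
    · rw [he1, he1', uniq hxb hxb', uniq hyb hyb']
    · rw [he1, he1', uniq hxb hyb', uniq hyb hxb', Sym2.eq_swap]
  have hImgcard : Img.card = EH.card := Finset.card_image_of_injOn hinj
  -- (d) Img disjoint from A
  have hdisjIA : Disjoint Img A := by
    rw [Finset.disjoint_left]
    intro g hg hgA
    rw [hImg, Finset.mem_image] at hg
    obtain ⟨e, he, rfl⟩ := hg
    rw [hEH, Set.Finite.mem_toFinset] at he
    obtain ⟨x, y, bb, bb', hxy, hg2, hxb, hyb, he1, hne1⟩ := hgiP e he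
    rw [hA, Finset.mem_biUnion] at hgA
    obtain ⟨c, _, hc⟩ := hgA
    rw [hEf, Set.Finite.mem_toFinset] at hc
    have hx : x ∈ f c := hc.2 x (by rw [hg2]; simp)
    have hy : y ∈ f c := hc.2 y (by rw [hg2]; simp)
    exact hne1 ((uniq hxb hx).trans (uniq hyb hy).symm)
  -- (e) Img ∪ A ⊆ Ef W
  have hsubW : Img ∪ A ⊆ Ef W := by
    intro g hg
    rw [Finset.mem_union] at hg
    rw [hEf, Set.Finite.mem_toFinset]
    rcases hg with hg | hg
    · rw [hImg, Finset.mem_image] at hg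
      obtain ⟨e, he, rfl⟩ := hg
      rw [hEH, Set.Finite.mem_toFinset] at he
      obtain ⟨x, y, bb, bb', hxy, hg2, hxb, hyb, he1, hne1⟩ := hgiP e he
      refine ⟨by rw [hg2]; exact (SimpleGraph.mem_edgeSet _).mpr hxy, ?_⟩
      intro z hz
      rw [hg2, Sym2.mem_iff] at hz
      rcases hz with rfl | rfl
      · exact Set.mem_iUnion.mpr ⟨bb, hxb⟩
      · exact Set.mem_iUnion.mpr ⟨bb', hyb⟩
    · rw [hA, Finset.mem_biUnion] at hg
      obtain ⟨c, _, hc⟩ := hg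
      rw [hEf, Set.Finite.mem_toFinset] at hc
      exact ⟨hc.1, fun x hx => Set.mem_iUnion.mpr ⟨c, hc.2 x hx⟩⟩
  have hcard1 : Img.card + A.card ≤ (Ef W).card := by
    rw [← Finset.card_union_of_disjoint hdisjIA]
    exact Finset.card_le_card hsubW
  -- (g) per-branch lower bound
  have hbranch : ∀ b, (f b).ncard ≤ (Ef (f b)).card + 1 := by
    intro b
    have := hEdgesIn (f b) (hne b) (hconn b)
    rwa [Set.ncard_eq_toFinset_card _ (Set.toFinite (edgesIn G (f b)))] at this
  -- (h) W.ncard = Σ (f b).ncard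
  have hWcard : W.ncard = ∑ b, (f b).ncard := by
    have h1 : (Set.toFinite W).toFinset = Finset.univ.biUnion (fun b => (Set.toFinite (f b)).toFinset) := by
      ext x
      simp only [Set.Finite.mem_toFinset, Finset.mem_biUnion, Finset.mem_univ, true_and, hW,
        Set.mem_iUnion]
    rw [Set.ncard_eq_toFinset_card _ (Set.toFinite W), h1,
      Finset.card_biUnion]
    · congr 1
      ext b
      exact (Set.ncard_eq_toFinset_card _ _).symm
    · intro b _ b' _ h
      simp only [Function.onFun]
      rw [Finset.disjoint_left]
      intro x hx hx'
      rw [Set.Finite.mem_toFinset] at hx hx'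
      exact h (uniq hx hx')
  have hEHcard : EH.card = H.edgeSet.ncard := (Set.ncard_eq_toFinset_card _ _).symm
  have hsumbranch : ∑ b, (f b).ncard ≤ (∑ b, (Ef (f b)).card) + Fintype.card β := by
    calc ∑ b, (f b).ncard ≤ ∑ b, ((Ef (f b)).card + 1) := Finset.sum_le_sum (fun b _ => hbranch b)
    _ = (∑ b, (Ef (f b)).card) + Fintype.card β := by
        rw [Finset.sum_add_distrib, Finset.sum_const, Finset.card_univ, smul_eq_mul, mul_one]
  have hfinal : (edgesIn G W).ncard = (Ef W).card := Set.ncard_eq_toFinset_card _ _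
  omega


end StmtAux

/-- if `H` is a biconnected minor of (the underlying graph of) a
binary phylogenetic network `N`, then `level N ≥ |E(H)| - |V(H)| + 1`. -/
theorem stmt13 {V : Type*} [Fintype V] {β : Type*} [Fintype β]
    (N : V → V → Prop) (ρ : V)
    (hphy : IsPhyloNet N ρ) (hbin : IsBinary N ρ)
    (H : SimpleGraph β)
    (hne : Nonempty β) (hconn : H.Preconnected)
    (hbic : ∀ v : β, (H.induce {w | w ≠ v}).Preconnected)
    (hminor : IsMinorOf H (underlying N)) :
    (H.edgeSet.ncard : ℤ) - (Fintype.card β : ℤ) + 1 ≤ (level N : ℤ) := by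
  classical
  set G : SimpleGraph V := underlying N with hGdef
  -- get a minimal (hence biconnected) minor model
  obtain ⟨f, hf, hbi⟩ := StmtAux.minimal_model_biconn G H hconn hbic (by
    obtain ⟨f, h1, h2, h3, h4⟩ := hminor
    exact ⟨f, h1, h2, h3, h4⟩)
  obtain ⟨hne', hconn', hdisj', hadj'⟩ := hf
  set W : Set V := ⋃ b, f b with hW
  have hWne : W.Nonempty := by
    obtain ⟨b⟩ := hne
    obtain ⟨x, hx⟩ := hne' b
    exact ⟨x, Set.mem_iUnion.mpr ⟨b, hx⟩⟩
  obtain ⟨hA, hB⟩ := hbi hWne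
  -- counting lemma for minor models
  have hL3 : H.edgeSet.ncard + W.ncard ≤ (StmtAux.edgesIn G W).ncard + Fintype.card β :=
    StmtAux.model_count G H f hne' hconn' hdisj' hadj'
      (fun S hS hSc => StmtAux.ncard_le_edgesIn hS hSc)
  -- reticulation counting lemma
  set R : Set V := {v | 2 ≤ inDeg N v} with hR
  have hmin := StmtAux.exists_min_rel (r := N) hphy.acyclic W.ncard W (Set.toFinite _)
    le_rfl hWne
  have hL2 : (StmtAux.edgesIn (SimpleGraph.fromRel N) W).ncard + 1 ≤
      W.ncard + (W ∩ {v | 2 ≤ {u | N u v}.ncard}).ncard :=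
    StmtAux.retic_bound N hphy.acyclic
      (fun v h => le_of_eq (hbin.retic_deg v h).1) hWne hmin
  have hRR : {v | 2 ≤ {u | N u v}.ncard} = R := rfl
  have hGfromRel : SimpleGraph.fromRel N = G := rfl
  rw [hRR, hGfromRel] at hL2
  -- W is biconnected, take a maximal biconnected superset (a blob)
  have hbiW : IsBiconn G W := ⟨hWne, hA, hB⟩
  set 𝒯 : Set (Set V) := {B | IsBiconn G B ∧ W ⊆ B} with h𝒯
  obtain ⟨B, hB𝒯, hBmax⟩ :=
    Set.Finite.exists_maximalFor Set.ncard 𝒯 (Set.toFinite _) ⟨W, hbiW, subset_rfl⟩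
  have hblob : IsBlob G B := by
    refine ⟨hB𝒯.1, ?_⟩
    intro B' hB' hsub
    have hB'𝒯 : B' ∈ 𝒯 := ⟨hB', hB𝒯.2.trans hsub⟩
    have hle : B.ncard ≤ B'.ncard := Set.ncard_le_ncard hsub (Set.toFinite _)
    have heq := hBmax hB'𝒯 hle
    exact (Set.eq_of_subset_of_ncard_le hsub heq (Set.toFinite _)).symm
  -- the level dominates the number of reticulations in the blob B
  have hmem : (B ∩ R).ncard ∈
      {k | ∃ B', IsBlob (underlying N) B' ∧ k = (B' ∩ {v | 2 ≤ inDeg N v}).ncard} :=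
    ⟨B, hblob, rfl⟩
  have hbdd : BddAbove
      {k | ∃ B', IsBlob (underlying N) B' ∧ k = (B' ∩ {v | 2 ≤ inDeg N v}).ncard} := by
    refine ⟨Fintype.card V, ?_⟩
    rintro k ⟨B', _, rfl⟩
    have h1 : (B' ∩ {v | 2 ≤ inDeg N v}).ncard ≤ (Set.univ : Set V).ncard :=
      Set.ncard_le_ncard (Set.subset_univ _) (Set.toFinite _)
    rwa [Set.ncard_univ, Nat.card_eq_fintype_card] at h1
  have hlev : (B ∩ R).ncard ≤ level N := le_csSup hbdd hmem
  have hmono : (W ∩ R).ncard ≤ (B ∩ R).ncard :=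
    Set.ncard_le_ncard (Set.inter_subset_inter_left R hB𝒯.2) (Set.toFinite _)
  omega
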